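/- Let π be a q-Weil number with [ℚ(π):ℚ] = 2g, Galois closure K with group G, conjugates (π_i, q/π_i) for 1 ≤ i ≤ g. Assume: (1) for each i, π_i and q/π_i are coprime in K (no prime of K divides both); (2) for each i there exists σ_i ∈ G fixing π_i and sending π_j to q/π_j for all j ≠ i. Then every q-Weil number lying in the multiplicative subgroup of K^× generated by π_1, …, π_g, q/π_1, …, q/π_g is a conjugate of π (i.e., equals some π_i or q/π_i). -/

import Mathlib

open IsDedekindDomain NumberField


namespace WeilAux
variable {R : Type*} [CommRing R] [IsDedekindDomain R] {K : Type*} [Field K]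
  [Algebra R K] [IsFractionRing R K]

/-- Additive valuation on `K` attached to a height-one prime, junk value 0 at 0. -/
noncomputable def aval (v : HeightOneSpectrum R) (x : K) : ℤ :=
  if h : v.valuation K x = 0 then 0 else - Multiplicative.toAdd (WithZero.unzero h)

lemma aval_eq (v : HeightOneSpectrum R) {x : K} (hx : x ≠ 0) :
    (v.valuation K x : WithZero (Multiplicative ℤ)) = Multiplicative.ofAdd (- aval v x) := by
  have h : v.valuation K x ≠ 0 := (Valuation.ne_zero_iff _).2 hx
  rw [aval, dif_neg h, neg_neg, ofAdd_toAdd, WithZero.coe_unzero]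

lemma aval_unique (v : HeightOneSpectrum R) {x : K} {n : ℤ}
    (h : v.valuation K x = Multiplicative.ofAdd (-n)) : aval v x = n := by
  have hx : x ≠ 0 := by
    intro h0
    rw [h0, map_zero] at h
    exact WithZero.zero_ne_coe h
  have := (aval_eq v hx).symm.trans h
  rw [WithZero.coe_inj] at this
  have := Multiplicative.ofAdd.injective this
  omega

lemma aval_mul (v : HeightOneSpectrum R) {x y : K} (hx : x ≠ 0) (hy : y ≠ 0) :
    aval v (x * y) = aval v x + aval v y := by
  apply aval_unique
  rw [map_mul, aval_eq v hx, aval_eq v hy, ← WithZero.coe_mul, ← ofAdd_add, neg_add]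

lemma aval_zpow (v : HeightOneSpectrum R) {x : K} (hx : x ≠ 0) (n : ℤ) :
    aval v (x ^ n) = n * aval v x := by
  apply aval_unique
  rw [map_zpow₀, aval_eq v hx, ← WithZero.coe_zpow, WithZero.coe_inj]
  rw [← ofAdd_zsmul, smul_neg, smul_eq_mul]

lemma aval_prod (v : HeightOneSpectrum R) {ι : Type*} (s : Finset ι) (f : ι → K)
    (hf : ∀ i ∈ s, f i ≠ 0) : aval v (∏ i ∈ s, f i) = ∑ i ∈ s, aval v (f i) := by
  classical
  induction s using Finset.induction with
  | empty =>
    rw [Finset.prod_empty, Finset.sum_empty]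
    apply aval_unique
    rw [map_one, neg_zero, ofAdd_zero, WithZero.coe_one]
  | insert _ _ hx ih =>
    rename_i a s
    rw [Finset.prod_insert hx, Finset.sum_insert hx,
      aval_mul v (hf a (s.mem_insert_self a)) (Finset.prod_ne_zero_iff.2 fun i hi => hf i (Finset.mem_insert_of_mem hi)),
      ih fun i hi => hf i (Finset.mem_insert_of_mem hi)]

lemma aval_nonneg (v : HeightOneSpectrum R) (x : R) :
    0 ≤ aval v (algebraMap R K x) := by
  by_cases hx : x = 0
  · simp [hx, aval]
  have hx' : algebraMap R K x ≠ 0 := by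
    simpa using (IsFractionRing.to_map_eq_zero_iff (K := K)).not.2 hx
  have h1 : v.valuation K (algebraMap R K x) ≤ 1 := v.valuation_le_one x
  rw [aval_eq v hx'] at h1
  rw [show (1 : WithZero (Multiplicative ℤ)) = Multiplicative.ofAdd (-(0:ℤ)) by simp] at h1
  rw [WithZero.coe_le_coe, Multiplicative.ofAdd_le] at h1
  omega

lemma aval_pos (v : HeightOneSpectrum R) {x : R} (hx : x ≠ 0) (hmem : x ∈ v.asIdeal) :
    0 < aval v (algebraMap R K x) := by
  have hx' : algebraMap R K x ≠ 0 := by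
    simpa using (IsFractionRing.to_map_eq_zero_iff (K := K)).not.2 hx
  have h1 : v.valuation K (algebraMap R K x) < 1 := by
    rw [v.valuation_lt_one_iff_dvd, Ideal.dvd_span_singleton]
    exact hmem
  rw [aval_eq v hx'] at h1
  rw [show (1 : WithZero (Multiplicative ℤ)) = Multiplicative.ofAdd (-(0:ℤ)) by simp] at h1
  rw [WithZero.coe_lt_coe, Multiplicative.ofAdd_lt] at h1
  omega

lemma aval_eq_zero_of_not_mem (v : HeightOneSpectrum R) {x : R} (hx : x ≠ 0)
    (hmem : x ∉ v.asIdeal) : aval v (algebraMap R K x) = 0 := by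
  have h0 := aval_nonneg (K := K) v x
  have hx' : algebraMap R K x ≠ 0 := by
    simpa using (IsFractionRing.to_map_eq_zero_iff (K := K)).not.2 hx
  by_contra hne
  have hlt : v.valuation K (algebraMap R K x) < 1 := by
    rw [aval_eq v hx']
    rw [show (1 : WithZero (Multiplicative ℤ)) = Multiplicative.ofAdd (-(0:ℤ)) by simp]
    rw [WithZero.coe_lt_coe, Multiplicative.ofAdd_lt]
    omega
  rw [v.valuation_lt_one_iff_dvd, Ideal.dvd_span_singleton] at hlt
  exact hmem hlt

end WeilAux

open NumberField

theorem zpow_sum₀ {M : Type*} [CommGroupWithZero M] {x : M} (hx : x ≠ 0) {ι : Type*}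
    (s : Finset ι) (f : ι → ℤ) : x ^ (∑ i ∈ s, f i) = ∏ i ∈ s, x ^ f i := by
  classical
  induction s using Finset.induction with
  | empty => simp
  | insert _ _ hmem ih =>
    rename_i a s
    rw [Finset.sum_insert hmem, Finset.prod_insert hmem, zpow_add₀ hx, ih]

theorem notunit_p (p : ℕ) (K : Type*) [Field K] [NumberField K]
    (hp : p.Prime) : ¬ IsUnit (p : 𝓞 K) := by
  intro hu
  obtain ⟨u, hu⟩ := hu.exists_left_inv
  have h2 : algebraMap (𝓞 K) K u * (p : K) = 1 := by
    have := congrArg (algebraMap (𝓞 K) K) hu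
    push_cast at this ⊢
    simpa using this
  have h3 : algebraMap (𝓞 K) K u = algebraMap ℚ K ((p : ℚ)⁻¹) := by
    rw [map_inv₀, map_natCast]
    exact eq_inv_of_mul_eq_one_left h2
  have hint : IsIntegral ℤ ((p:ℚ)⁻¹) := by
    rw [← isIntegral_algebraMap_iff (algebraMap ℚ K).injective, ← h3]
    exact (u : 𝓞 K).2
  obtain ⟨m, hm⟩ := IsIntegrallyClosed.isIntegral_iff.mp hint
  have hp0 : (p : ℚ) ≠ 0 := by exact_mod_cast hp.ne_zero
  have h4 : (m * p : ℚ) = 1 := by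
    rw [show ((m:ℚ)) = (p:ℚ)⁻¹ from by exact_mod_cast hm]
    field_simp
  have h5 : m * (p:ℤ) = 1 := by exact_mod_cast h4
  have h6 := Int.eq_one_of_mul_eq_one_left (by positivity) h5
  have h7 : p = 1 := by exact_mod_cast h6
  exact hp.one_lt.ne' h7

open WeilAux

/-- Proposition 2: let `π` be a `q`-Weil number (`q = p^k`) with conjugates
`(π_i, q/π_i = π'_i)`, `1 ≤ i ≤ g`.  Assume (1) each pair `π_i, π'_i` is coprime
in the Galois closure `K` and (2) for each `i` there is a Galois element fixing
`π_i` and sending `π_j` to `π'_j` for `j ≠ i`.  Then every `q`-Weil number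
lying in the multiplicative group generated by the `π_i, π'_i` is one of the
conjugates `π_i` or `π'_i`. -/
theorem weil_numbers_in_group_are_conjugates
    (p k g : ℕ) (hp : p.Prime) (hk : 1 ≤ k) (hg : 1 ≤ g)
    (K : Type*) [Field K] [NumberField K]
    (π π' : Fin g → RingOfIntegers K)
    (hfac : ∀ i, π i * π' i = (p ^ k : RingOfIntegers K))
    (hweil : ∀ i, ∀ σ : K →+* ℂ,
      ‖σ (algebraMap (RingOfIntegers K) K (π i))‖ = Real.sqrt ((p : ℝ) ^ k))
    -- (1) coprimality of each pair
    (hcop : ∀ i, ∀ v : HeightOneSpectrum (RingOfIntegers K),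
      ¬(π i ∈ v.asIdeal ∧ π' i ∈ v.asIdeal))
    -- complex conjugation on K, exchanging π_i and π'_i
    (c : K ≃ₐ[ℚ] K)
    (hc : ∀ i, c (algebraMap (RingOfIntegers K) K (π i)) = algebraMap (RingOfIntegers K) K (π' i))
    (ι : K →+* ℂ) (hι : ∀ x, ι (c x) = starRingEnd ℂ (ι x))
    -- (2) the Galois elements σ_i
    (hσ : ∀ i, ∃ σ : K ≃ₐ[ℚ] K,
      σ (algebraMap (RingOfIntegers K) K (π i)) = algebraMap (RingOfIntegers K) K (π i) ∧
      ∀ j, j ≠ i → σ (algebraMap (RingOfIntegers K) K (π j)) = algebraMap (RingOfIntegers K) K (π' j))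
    -- α is a q-Weil number in the group generated by the conjugates of π
    (α : K)
    (hαmem : ∃ a b : Fin g → ℤ,
      α = (∏ i, (algebraMap (RingOfIntegers K) K (π i)) ^ (a i)) *
          ∏ i, (algebraMap (RingOfIntegers K) K (π' i)) ^ (b i))
    (hαint : IsIntegral ℤ α)
    (hαweil : ∀ σ : K →+* ℂ, ‖σ α‖ = Real.sqrt ((p : ℝ) ^ k)) :
    ∃ i, α = algebraMap (RingOfIntegers K) K (π i) ∨
         α = algebraMap (RingOfIntegers K) K (π' i) := by
  classical
  set F := algebraMap (RingOfIntegers K) K with hF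
  set Q : K := (p : K) ^ k with hQdef
  -- basic facts
  have hQ0 : Q ≠ 0 := by
    apply pow_ne_zero
    exact_mod_cast hp.ne_zero
  have hQimg : F ((p : RingOfIntegers K) ^ k) = Q := by
    rw [map_pow, map_natCast]
  have hPP' : ∀ i, F (π i) * F (π' i) = Q := by
    intro i
    have h := congrArg F (hfac i)
    rw [map_mul] at h
    rw [h, hQimg]
  have hP0 : ∀ i, F (π i) ≠ 0 := by
    intro i h
    apply hQ0; rw [← hPP' i, h, zero_mul]
  have hP'0 : ∀ i, F (π' i) ≠ 0 := by
    intro i h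
    apply hQ0; rw [← hPP' i, h, mul_zero]
  have hπ0 : ∀ i, π i ≠ 0 := by
    intro i h
    exact hP0 i (by rw [h, map_zero])
  have hπ'0 : ∀ i, π' i ≠ 0 := by
    intro i h
    exact hP'0 i (by rw [h, map_zero])
  -- the real number s
  set s : ℝ := Real.sqrt ((p : ℝ) ^ k) with hs
  have hppos : (1:ℝ) < (p:ℝ)^k := by
    have h2 : (2:ℝ) ≤ (p:ℝ) := by exact_mod_cast hp.two_le
    calc (1:ℝ) < 2 := by norm_num
    _ ≤ (p:ℝ) := h2
    _ = (p:ℝ)^1 := (pow_one _).symm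
    _ ≤ (p:ℝ)^k := pow_le_pow_right₀ (by linarith) hk
  have hs1 : 1 < s := by
    rw [hs, show (1:ℝ) = Real.sqrt 1 by simp]
    exact Real.sqrt_lt_sqrt (by norm_num) hppos
  have hs0 : 0 < s := by linarith
  have hssq : s ^ 2 = (p:ℝ)^k := Real.sq_sqrt (by positivity)
  -- exponents
  obtain ⟨a, b, hab⟩ := hαmem
  set d : Fin g → ℤ := fun i => a i - b i with hd
  set B : ℤ := ∑ i, b i with hB
  -- canonical form
  have hstep : ∀ j : Fin g, F (π j) ^ a j * F (π' j) ^ b j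
      = F (π j) ^ (a j - b j) * Q ^ b j := by
    intro j
    have h1 : F (π' j) = Q * (F (π j))⁻¹ := by
      rw [← hPP' j, mul_comm (F (π j)), mul_assoc, mul_inv_cancel₀ (hP0 j), mul_one]
    calc F (π j) ^ a j * F (π' j) ^ b j
        = F (π j) ^ a j * (Q * (F (π j))⁻¹) ^ b j := by rw [h1]
      _ = F (π j) ^ a j * (Q ^ b j * ((F (π j))⁻¹) ^ b j) := by rw [mul_zpow]
      _ = F (π j) ^ a j * (Q ^ b j * (F (π j)) ^ (-(b j))) := by rw [inv_zpow, ← zpow_neg]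
      _ = F (π j) ^ (a j + -(b j)) * Q ^ b j := by rw [zpow_add₀ (hP0 j)]; ring
      _ = F (π j) ^ (a j - b j) * Q ^ b j := by rw [← sub_eq_add_neg]
  have hcanon : α = Q ^ B * ∏ j, F (π j) ^ d j := by
    simp only [hd, hB]
    rw [hab, ← Finset.prod_mul_distrib,
      Finset.prod_congr rfl (fun j _ => hstep j), Finset.prod_mul_distrib,
      ← zpow_sum₀ hQ0]
    ring
  -- S = 1
  have hsum : (∑ i, d i) + 2 * B = 1 := by
    have hια : ‖ι α‖ = s := hαweil ι
    have hQabs : ‖ι Q‖ = s ^ (2:ℤ) := by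
      rw [hQdef, map_pow, map_natCast, norm_pow, Complex.norm_natCast,
        zpow_two, ← pow_two, hssq]
    have hPabs : ∀ j : Fin g, ‖ι (F (π j))‖ = s := fun j => hweil j ι
    have hcalc : ‖ι α‖ = s ^ ((∑ i, d i) + 2 * B) := by
      rw [hcanon, map_mul, map_zpow₀, map_prod, norm_mul,
        norm_zpow, norm_prod, hQabs]
      have habsj : ∀ j : Fin g, ‖ι (F (π j) ^ d j)‖ = s ^ d j := by
        intro j
        rw [map_zpow₀ ι, norm_zpow, hPabs j]
      rw [Finset.prod_congr rfl (fun j _ => habsj j), ← zpow_sum₀ (ne_of_gt hs0),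
        ← zpow_mul, ← zpow_add₀ (ne_of_gt hs0)]
      congr 1
      ring
    have : s ^ ((∑ i, d i) + 2 * B) = s ^ (1:ℤ) := by
      rw [← hcalc, hια, zpow_one]
    exact zpow_right_injective₀ hs0 (ne_of_gt hs1) this
  -- conjugation facts
  have hcQ : ∀ θ : K ≃ₐ[ℚ] K, θ Q = Q := by
    intro θ
    rw [hQdef, map_pow, map_natCast]
  have hmulθ : ∀ (θ : K ≃ₐ[ℚ] K) (j : Fin g), θ (F (π j)) * θ (F (π' j)) = Q := by
    intro θ j
    rw [← map_mul, hPP' j, hcQ θ]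
  have hcP' : ∀ i, c (F (π' i)) = F (π i) := by
    intro i
    have h1 : F (π' i) * c (F (π' i)) = F (π' i) * F (π i) := by
      calc F (π' i) * c (F (π' i)) = c (F (π i)) * c (F (π' i)) := by rw [hc i]
        _ = Q := hmulθ c i
        _ = F (π' i) * F (π i) := by rw [← hPP' i]; ring
    exact mul_left_cancel₀ (hP'0 i) h1
  -- α * c α = Q
  have hαc : α * c α = Q := by
    apply ι.injective
    rw [map_mul, hι α, Complex.mul_conj, Complex.normSq_eq_norm_sq, hαweil ι,
      hQdef, map_pow, map_natCast, hssq]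
    push_cast
    ring
  have hα0 : α ≠ 0 := by
    intro h
    apply hQ0; rw [← hαc, h, zero_mul]
  -- flipping automorphisms
  have hρ : ∀ i, ∃ ρ : K ≃ₐ[ℚ] K, (ρ (F (π i)) = F (π' i)) ∧
      (∀ j, j ≠ i → ρ (F (π j)) = F (π j)) ∧
      (ρ (F (π' i)) = F (π i)) ∧ (∀ j, j ≠ i → ρ (F (π' j)) = F (π' j)) := by
    intro i
    obtain ⟨σ, hσ1, hσ2⟩ := hσ i
    have hσ1' : σ (F (π' i)) = F (π' i) := by
      have h1 : F (π i) * σ (F (π' i)) = F (π i) * F (π' i) := by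
        calc F (π i) * σ (F (π' i)) = σ (F (π i)) * σ (F (π' i)) := by rw [hσ1]
          _ = Q := hmulθ σ i
          _ = F (π i) * F (π' i) := (hPP' i).symm
      exact mul_left_cancel₀ (hP0 i) h1
    have hσ2' : ∀ j, j ≠ i → σ (F (π' j)) = F (π j) := by
      intro j hj
      have h1 : F (π' j) * σ (F (π' j)) = F (π' j) * F (π j) := by
        calc F (π' j) * σ (F (π' j)) = σ (F (π j)) * σ (F (π' j)) := by rw [hσ2 j hj]
          _ = Q := hmulθ σ j
          _ = F (π' j) * F (π j) := by rw [← hPP' j]; ring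
      exact mul_left_cancel₀ (hP'0 j) h1
    refine ⟨σ.trans c, ?_, ?_, ?_, ?_⟩
    · rw [AlgEquiv.trans_apply, hσ1, hc i]
    · intro j hj; rw [AlgEquiv.trans_apply, hσ2 j hj, hcP' j]
    · rw [AlgEquiv.trans_apply, hσ1', hcP' i]
    · intro j hj; rw [AlgEquiv.trans_apply, hσ2' j hj, hc j]
  -- choose a place above p
  obtain ⟨v0, hv0⟩ : ∃ v : HeightOneSpectrum (RingOfIntegers K),
      (p : RingOfIntegers K) ∈ v.asIdeal := by
    have hnu := notunit_p p K hp
    have hne : Ideal.span {(p : RingOfIntegers K)} ≠ ⊤ := by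
      intro h; exact hnu (Ideal.span_singleton_eq_top.mp h)
    obtain ⟨M, hMmax, hMle⟩ := Ideal.exists_le_maximal _ hne
    have hp0R : (p : RingOfIntegers K) ≠ 0 := by
      exact_mod_cast hp.ne_zero
    refine ⟨⟨M, hMmax.isPrime, ?_⟩, hMle (Ideal.mem_span_singleton_self _)⟩
    intro hbot
    apply hp0R
    have := hMle (Ideal.mem_span_singleton_self (p : RingOfIntegers K))
    rwa [hbot, Ideal.mem_bot] at this
  -- value bounds for automorphism images of α
  have hbound : ∀ θ : K ≃ₐ[ℚ] K, 0 ≤ aval v0 (θ α) ∧ aval v0 (θ α) ≤ aval v0 Q := by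
    intro θ
    have hint1 : IsIntegral ℤ (θ α) := map_isIntegral_int θ hαint
    have hint2 : IsIntegral ℤ (θ (c α)) := map_isIntegral_int θ (map_isIntegral_int c hαint)
    have h1 : θ α * θ (c α) = Q := by rw [← map_mul, hαc, hcQ θ]
    have hθα0 : θ α ≠ 0 := by
      intro h; apply hQ0; rw [← h1, h, zero_mul]
    have hθcα0 : θ (c α) ≠ 0 := by
      intro h; apply hQ0; rw [← h1, h, mul_zero]
    have hge1 : 0 ≤ aval v0 (θ α) := by
      have := aval_nonneg (K := K) v0 ⟨θ α, hint1⟩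
      exact this
    have hge2 : 0 ≤ aval v0 (θ (c α)) := by
      have := aval_nonneg (K := K) v0 ⟨θ (c α), hint2⟩
      exact this
    have hadd : aval v0 (θ α) + aval v0 (θ (c α)) = aval v0 Q := by
      rw [← aval_mul v0 hθα0 hθcα0, h1]
    exact ⟨hge1, by omega⟩
  -- valuation of θ α
  have hval : ∀ θ : K ≃ₐ[ℚ] K, aval v0 (θ α) =
      B * aval v0 Q + ∑ j, d j * aval v0 (θ (F (π j))) := by
    intro θ
    have hθP0 : ∀ j : Fin g, θ (F (π j)) ≠ 0 := by
      intro j h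
      exact hP0 j (by simpa using θ.injective (h.trans (map_zero θ).symm))
    rw [hcanon, map_mul, map_zpow₀, map_prod, hcQ θ,
      Finset.prod_congr rfl (fun j _ => map_zpow₀ θ (F (π j)) (d j)),
      aval_mul v0 (zpow_ne_zero _ hQ0)
        (Finset.prod_ne_zero_iff.2 fun j _ => zpow_ne_zero _ (hθP0 j)),
      aval_zpow v0 hQ0,
      aval_prod v0 _ _ (fun j _ => zpow_ne_zero _ (hθP0 j)),
      Finset.sum_congr rfl (fun j _ => aval_zpow v0 (hθP0 j) (d j))]
  have hval0 : aval v0 α = B * aval v0 Q + ∑ j, d j * aval v0 (F (π j)) := by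
    have := hval (AlgEquiv.refl)
    simpa using this
  have hbound0 : 0 ≤ aval v0 α ∧ aval v0 α ≤ aval v0 Q := by
    have := hbound (AlgEquiv.refl)
    simpa using this
  have hQVpos : 0 < aval v0 Q := by
    have hmem : (p : RingOfIntegers K) ^ k ∈ v0.asIdeal :=
      Ideal.pow_mem_of_mem _ hv0 k hk
    have hne : (p : RingOfIntegers K) ^ k ≠ 0 := by
      apply pow_ne_zero
      exact_mod_cast hp.ne_zero
    have h0 := aval_pos (K := K) v0 hne hmem
    rw [← hF] at h0
    rwa [hQimg] at h0
  have hee' : ∀ i, aval v0 (F (π i)) + aval v0 (F (π' i)) = aval v0 Q := by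
    intro i
    rw [← aval_mul v0 (hP0 i) (hP'0 i), hPP' i]
  have hdich : ∀ i, (aval v0 (F (π i)) = 0 ∧ aval v0 (F (π' i)) = aval v0 Q) ∨
      (aval v0 (F (π' i)) = 0 ∧ aval v0 (F (π i)) = aval v0 Q) := by
    intro i
    have h := hee' i
    rcases not_and_or.mp (hcop i v0) with hm | hm
    · left
      have h0 := aval_eq_zero_of_not_mem (K := K) v0 (hπ0 i) hm
      rw [← hF] at h0
      constructor <;> omega
    · right
      have h0 := aval_eq_zero_of_not_mem (K := K) v0 (hπ'0 i) hm
      rw [← hF] at h0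
      constructor <;> omega
  -- difference formula
  have hdiff : ∀ (θ : K ≃ₐ[ℚ] K) (T : Finset (Fin g)),
      (∀ l, l ∉ T → θ (F (π l)) = F (π l)) → (∀ l, l ∈ T → θ (F (π l)) = F (π' l)) →
      aval v0 (θ α) - aval v0 α
        = ∑ l ∈ T, d l * (aval v0 (F (π' l)) - aval v0 (F (π l))) := by
    intro θ T hout hin
    rw [hval θ, hval0]
    have h1 : ∑ l ∈ T, d l * (aval v0 (F (π' l)) - aval v0 (F (π l)))
        = ∑ l ∈ T, (d l * aval v0 (θ (F (π l))) - d l * aval v0 (F (π l))) := by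
      apply Finset.sum_congr rfl
      intro l hl
      rw [hin l hl]; ring
    rw [h1, Finset.sum_subset (Finset.subset_univ T)
      (fun l _ hl => by rw [hout l hl]; ring), Finset.sum_sub_distrib]
    ring
  -- |d i| ≤ 1
  have hd1 : ∀ i, d i = -1 ∨ d i = 0 ∨ d i = 1 := by
    intro i
    obtain ⟨ρ, hρ1, hρ2, _, _⟩ := hρ i
    have h1 := hdiff ρ {i}
      (fun l hl => hρ2 l (by simpa using hl))
      (fun l hl => by rw [Finset.mem_singleton] at hl; rw [hl, hρ1])
    rw [Finset.sum_singleton] at h1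
    obtain ⟨hb1, hb2⟩ := hbound ρ
    obtain ⟨hb3, hb4⟩ := hbound0
    have hlo : -(aval v0 Q) ≤ d i * (aval v0 (F (π' i)) - aval v0 (F (π i))) := by omega
    have hhi : d i * (aval v0 (F (π' i)) - aval v0 (F (π i))) ≤ aval v0 Q := by omega
    rcases hdich i with ⟨h5, h6⟩ | ⟨h5, h6⟩ <;> rw [h5, h6] at hlo hhi
    · have hle : d i ≤ 1 := by nlinarith
      have hge : -1 ≤ d i := by nlinarith
      omega
    · have hle : d i ≤ 1 := by nlinarith
      have hge : -1 ≤ d i := by nlinarith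
      omega
  -- at most one nonzero
  have hd2 : ∀ i j, i ≠ j → d i ≠ 0 → d j ≠ 0 → False := by
    intro i j hij hdi hdj
    obtain ⟨ρi, hi1, hi2, hi3, hi4⟩ := hρ i
    obtain ⟨ρj, hj1, hj2, hj3, hj4⟩ := hρ j
    have hT : ({i, j} : Finset (Fin g)) = {i, j} := rfl
    have hpair : i ∉ ({j} : Finset (Fin g)) := by simpa using hij
    -- θij flips both i and j
    have hθout : ∀ l, l ∉ ({i, j} : Finset (Fin g)) →
        (ρi.trans ρj) (F (π l)) = F (π l) := by
      intro l hl
      simp only [Finset.mem_insert, Finset.mem_singleton, not_or] at hl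
      rw [AlgEquiv.trans_apply, hi2 l hl.1, hj2 l hl.2]
    have hθin : ∀ l, l ∈ ({i, j} : Finset (Fin g)) →
        (ρi.trans ρj) (F (π l)) = F (π' l) := by
      intro l hl
      simp only [Finset.mem_insert, Finset.mem_singleton] at hl
      rcases hl with rfl | rfl
      · rw [AlgEquiv.trans_apply, hi1, hj4 l (fun h => hij h)]
      · rw [AlgEquiv.trans_apply, hi2 l (fun h => hij h.symm), hj1]
    have h1 := hdiff (ρi.trans ρj) {i, j} hθout hθin
    rw [Finset.sum_pair hij] at h1
    have h2 := hdiff ρi {i}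
      (fun l hl => hi2 l (by simpa using hl))
      (fun l hl => by rw [Finset.mem_singleton] at hl; rw [hl, hi1])
    rw [Finset.sum_singleton] at h2
    have h3 := hdiff ρj {j}
      (fun l hl => hj2 l (by simpa using hl))
      (fun l hl => by rw [Finset.mem_singleton] at hl; rw [hl, hj1])
    rw [Finset.sum_singleton] at h3
    obtain ⟨hbi1, hbi2⟩ := hbound ρi
    obtain ⟨hbj1, hbj2⟩ := hbound ρj
    obtain ⟨hbij1, hbij2⟩ := hbound (ρi.trans ρj)
    obtain ⟨hb3, hb4⟩ := hbound0
    have hxval : d i * (aval v0 (F (π' i)) - aval v0 (F (π i))) = aval v0 Q ∨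
        d i * (aval v0 (F (π' i)) - aval v0 (F (π i))) = -(aval v0 Q) := by
      rcases hd1 i with h | h | h <;> rcases hdich i with ⟨h5, h6⟩ | ⟨h5, h6⟩ <;>
        rw [h, h5, h6] <;> omega
    have hyval : d j * (aval v0 (F (π' j)) - aval v0 (F (π j))) = aval v0 Q ∨
        d j * (aval v0 (F (π' j)) - aval v0 (F (π j))) = -(aval v0 Q) := by
      rcases hd1 j with h | h | h <;> rcases hdich j with ⟨h5, h6⟩ | ⟨h5, h6⟩ <;>
        rw [h, h5, h6] <;> omega
    rcases hxval with hx | hx <;> rcases hyval with hy | hy <;>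
      rw [hx, hy] at h1 <;> rw [hx] at h2 <;> rw [hy] at h3 <;> omega
  -- find the nonzero index
  have hne : ∃ i, d i ≠ 0 := by
    by_contra h
    push_neg at h
    rw [Finset.sum_congr rfl (fun i _ => h i), Finset.sum_const_zero] at hsum
    omega
  obtain ⟨i, hi⟩ := hne
  have hothers : ∀ j, j ≠ i → d j = 0 := by
    intro j hj
    by_contra h
    exact hd2 i j (fun hh => hj hh.symm) hi h
  have hsum' : d i + 2 * B = 1 := by
    rw [← hsum, Finset.sum_eq_single i (fun j _ hj => hothers j hj) (by simp)]
  have hprod : ∏ j, F (π j) ^ (d j) = F (π i) ^ (d i) :=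
    Finset.prod_eq_single i (fun j _ hj => by rw [hothers j hj, zpow_zero]) (by simp)
  refine ⟨i, ?_⟩
  rcases hd1 i with h | h | h
  · right
    have hB1 : B = 1 := by omega
    rw [hcanon, hprod, h, hB1, zpow_one, zpow_neg, zpow_one, ← hPP' i,
      mul_comm (F (π i)) (F (π' i)), mul_assoc, mul_inv_cancel₀ (hP0 i), mul_one]
  · exact absurd h hi
  · left
    have hB0 : B = 0 := by omega
    rw [hcanon, hprod, h, hB0, zpow_zero, zpow_one, one_mul]
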